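/- Let A be a centrally essential (unital, associative) ring and let G be a commutative monoid. Then the monoid ring A[G] is a centrally essential ring. -/

import Mathlib

/-- A ring `R` is *centrally essential* if for every nonzero `r ∈ R` there is a central
element `c` such that `c * r` is a nonzero central element. -/
def IsCentrallyEssential (R : Type*) [Ring R] : Prop :=
  ∀ r : R, r ≠ 0 → ∃ c ∈ Subring.center R, c * r ≠ 0 ∧ c * r ∈ Subring.center R

section Aux

variable {A : Type*} [Ring A] {G : Type*} [CommMonoid G]

lemma aux_single_mul_comm (z : MonoidAlgebra A G) (hz : ∀ g, z.coeff g ∈ Subring.center A)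
    (a : G) (b : A) :
    MonoidAlgebra.single a b * z = z * MonoidAlgebra.single a b := by
  induction z using MonoidAlgebra.induction with
  | zero => simp
  | single_add a' b' f ha' hb' ih =>
    have hb'c : b' ∈ Subring.center A := by
      have := hz a'
      rwa [MonoidAlgebra.coeff_add, Finsupp.add_apply, MonoidAlgebra.coeff_single,
        Finsupp.single_eq_same, Finsupp.notMem_support_iff.mp ha', add_zero] at this
    have hf : ∀ g, f.coeff g ∈ Subring.center A := by
      intro g
      by_cases hg : g = a'
      · subst hg
        rw [Finsupp.notMem_support_iff.mp ha']
        exact Subring.zero_mem _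
      · have := hz g
        rwa [MonoidAlgebra.coeff_add, Finsupp.add_apply, MonoidAlgebra.coeff_single,
          Finsupp.single_eq_of_ne hg, zero_add] at this
    rw [mul_add, add_mul, ih hf]
    congr 1
    rw [MonoidAlgebra.single_mul_single, MonoidAlgebra.single_mul_single,
      mul_comm a a', Subring.mem_center_iff.mp hb'c b]

lemma aux_central_of_coeffs (z : MonoidAlgebra A G)
    (hz : ∀ g, z.coeff g ∈ Subring.center A) :
    z ∈ Subring.center (MonoidAlgebra A G) := by
  rw [Subring.mem_center_iff]
  intro m
  induction m using MonoidAlgebra.induction with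
  | zero => simp
  | single_add a b f _ _ ih =>
    rw [add_mul, mul_add, ih, aux_single_mul_comm z hz a b]

lemma aux_key (hA : IsCentrallyEssential A) (S : Finset G) :
    ∀ r : MonoidAlgebra A G, r.coeff.support ⊆ S → r ≠ 0 →
      ∃ c ∈ Subring.center A, (∀ h, c * r.coeff h ∈ Subring.center A) ∧ (∃ h, c * r.coeff h ≠ 0) := by
  classical
  induction S using Finset.induction with
  | empty =>
    intro r hsupp hr
    exact absurd (MonoidAlgebra.coeff_eq_zero.mp <| Finsupp.support_eq_empty.mp (Finset.subset_empty.mp hsupp)) hr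
  | @insert g₀ S hg₀ ih =>
    intro r hsupp hr
    set a := r.coeff g₀ with ha_def
    by_cases ha : a = 0
    · -- then support r ⊆ S
      apply ih r _ hr
      intro h hh
      rcases Finset.mem_insert.mp (hsupp hh) with rfl | hS
      · exact absurd ha (Finsupp.mem_support_iff.mp hh)
      · exact hS
    · set r' := r.erase g₀ with hr'_def
      have hr'supp : r'.coeff.support ⊆ S := by
        intro h hh
        rw [hr'_def, MonoidAlgebra.coeff_erase, Finsupp.support_erase, Finset.mem_erase] at hh
        rcases Finset.mem_insert.mp (hsupp hh.2) with rfl | hS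
        · exact absurd rfl hh.1
        · exact hS
      have hr'g₀ : r'.coeff g₀ = 0 := Finsupp.erase_same
      have hr'ne : ∀ h, h ≠ g₀ → r'.coeff h = r.coeff h := fun h hh => Finsupp.erase_ne hh
      by_cases hr' : r' = 0
      · -- r is essentially single g₀ a
        obtain ⟨c₁, hc₁, hc₁a, hc₁ac⟩ := hA a ha
        refine ⟨c₁, hc₁, ?_, ⟨g₀, hc₁a⟩⟩
        intro h
        by_cases hh : h = g₀
        · subst hh; exact hc₁ac
        · have : r.coeff h = 0 := by rw [← hr'ne h hh, hr', MonoidAlgebra.coeff_zero, Finsupp.coe_zero, Pi.zero_apply]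
          rw [this, mul_zero]; exact Subring.zero_mem _
      · obtain ⟨c₂, hc₂, hc₂c, h₂, hc₂h₂⟩ := ih r' hr'supp hr'
        by_cases ha₂ : c₂ * a = 0
        · refine ⟨c₂, hc₂, ?_, ?_⟩
          · intro h
            by_cases hh : h = g₀
            · subst hh; rw [← ha_def, ha₂]; exact Subring.zero_mem _
            · rw [← hr'ne h hh]; exact hc₂c h
          · refine ⟨h₂, ?_⟩
            have hne : h₂ ≠ g₀ := by
              intro hEq
              apply hc₂h₂
              rw [hEq, hr'g₀, mul_zero]
            rwa [← hr'ne h₂ hne]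
        · obtain ⟨c₁, hc₁, hc₁a, hc₁ac⟩ := hA (c₂ * a) ha₂
          refine ⟨c₁ * c₂, Subring.mul_mem _ hc₁ hc₂, ?_, ⟨g₀, ?_⟩⟩
          · intro h
            by_cases hh : h = g₀
            · subst hh; rw [mul_assoc, ← ha_def]; exact hc₁ac
            · rw [mul_assoc, ← hr'ne h hh]
              exact Subring.mul_mem _ hc₁ (hc₂c h)
          · rw [mul_assoc, ← ha_def]; exact hc₁a

end Aux

theorem monoid_ring_centrally_essential
    (A : Type*) [Ring A] (hA : IsCentrallyEssential A)
    (G : Type*) [CommMonoid G] :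
    IsCentrallyEssential (MonoidAlgebra A G) := by
  intro r hr
  obtain ⟨c, hc, hcc, h₀, hh₀⟩ := aux_key hA r.coeff.support r (le_refl _) hr
  refine ⟨MonoidAlgebra.single 1 c, ?_, ?_, ?_⟩
  · apply aux_central_of_coeffs
    intro g
    by_cases hg : g = 1
    · subst hg; rwa [MonoidAlgebra.coeff_single, Finsupp.single_eq_same]
    · rw [MonoidAlgebra.coeff_single, Finsupp.single_eq_of_ne hg]
      exact Subring.zero_mem _
  · intro hzero
    apply hh₀
    have := congrArg (fun f : MonoidAlgebra A G => f.coeff h₀) hzero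
    simpa [MonoidAlgebra.coeff_single_one_mul] using this
  · apply aux_central_of_coeffs
    intro g
    rw [MonoidAlgebra.coeff_single_one_mul]
    exact hcc g
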